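/- In the SBBA mechanism with s_{k+1} > b_k and k ≥ 1, a trading seller who raises her ask strictly above b_k is excluded from trade: after re-sorting, the number of efficient deals becomes k - 1 and the deviating seller becomes the (new) k-th seller excluded from trade; hence b_k is the critical ask for sellers. -/

import Mathlib

open scoped Classical

/-! Formalization of the SBBA mechanism on raw bid profiles.
Sellers' asks `A` are sorted ascending and buyers' bids `B` descending using
`Tuple.sort` (which also provides a fixed tie-breaking order).  Ranks are 0-based:
the number of efficient deals `numDeals` is the largest `K` with
`sortedAsks (K-1) ≤ sortedBids (K-1)`; "`s (k+1)`" is `sortedAsks K` and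
"`b k`" is `sortedBids (K-1)`. -/

/-- The `i`-th lowest ask (0-based); arbitrary value `0` beyond the range. -/
noncomputable def sortedAsks {n : ℕ} (A : Fin n → ℝ) : ℕ → ℝ := fun i =>
  if h : i < n then A (Tuple.sort A ⟨i, h⟩) else 0

/-- The `i`-th highest bid (0-based); arbitrary value `0` beyond the range. -/
noncomputable def sortedBids {n : ℕ} (B : Fin n → ℝ) : ℕ → ℝ := fun i =>
  if h : i < n then B (Tuple.sort (fun j => -B j) ⟨i, h⟩) else 0

/-- `K`, the number of efficient deals: the number of positions where the sorted
ask is at most the sorted bid. -/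
noncomputable def numDeals {n : ℕ} (A B : Fin n → ℝ) : ℕ :=
  ((Finset.range n).filter fun i => sortedAsks A i ≤ sortedBids B i).card

/-- 0-based rank of seller `j` in the ascending order of asks. -/
noncomputable def sellerRank {n : ℕ} (A : Fin n → ℝ) (j : Fin n) : ℕ :=
  ((Tuple.sort A).symm j : ℕ)

/-- 0-based rank of buyer `j` in the descending order of bids. -/
noncomputable def buyerRank {n : ℕ} (B : Fin n → ℝ) (j : Fin n) : ℕ :=
  ((Tuple.sort (fun i => -B i)).symm j : ℕ)

/-- Case 1 of SBBA: `s (k+1) ≤ b k` (in particular `k ≥ 1` and `k < n`). -/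
def caseOne {n : ℕ} (A B : Fin n → ℝ) : Prop :=
  1 ≤ numDeals A B ∧ numDeals A B < n ∧
    sortedAsks A (numDeals A B) ≤ sortedBids B (numDeals A B - 1)

/-- The single SBBA trading price `min (s (k+1)) (b k)`:
`s (k+1)` in case 1, `b k` in case 2. -/
noncomputable def price {n : ℕ} (A B : Fin n → ℝ) : ℝ :=
  if caseOne A B then sortedAsks A (numDeals A B) else sortedBids B (numDeals A B - 1)

/-- Buyer `j` wins (trades with probability 1): in case 1 the first `K` buyers win,
in case 2 the first `K - 1` buyers win. -/
noncomputable def buyerWins {n : ℕ} (A B : Fin n → ℝ) (j : Fin n) : Prop :=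
  if caseOne A B then buyerRank B j < numDeals A B
  else buyerRank B j + 1 < numDeals A B

/-- Seller `j`'s probability of trading: `1` for the first `K` sellers in case 1,
`1 - 1/K` for them in case 2 (one of them, uniformly random, is excluded),
and `0` for all other sellers. -/
noncomputable def sellerProb {n : ℕ} (A B : Fin n → ℝ) (j : Fin n) : ℝ :=
  if sellerRank A j < numDeals A B then
    (if caseOne A B then 1 else 1 - 1 / (numDeals A B : ℝ))
  else 0

-- count of asks ≤ x
noncomputable def countA {n : ℕ} (A : Fin n → ℝ) (x : ℝ) : ℕ :=
  Fintype.card {i // A i ≤ x}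

lemma countA_le {n : ℕ} (A : Fin n → ℝ) (x : ℝ) : countA A x ≤ n := by
  simpa [countA] using Fintype.card_subtype_le (fun i : Fin n => A i ≤ x)

lemma sortedAsks_mono {n : ℕ} (A : Fin n → ℝ) {i j : ℕ} (hij : i ≤ j) (hj : j < n) :
    sortedAsks A i ≤ sortedAsks A j := by
  have hi : i < n := lt_of_le_of_lt hij hj
  simp only [sortedAsks, dif_pos hi, dif_pos hj]
  exact Tuple.monotone_sort A (show (⟨i, hi⟩ : Fin n) ≤ ⟨j, hj⟩ from hij)

lemma sortedAsks_le_iff {n : ℕ} (A : Fin n → ℝ) (x : ℝ) {i : ℕ} (hi : i < n) :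
    sortedAsks A i ≤ x ↔ i < countA A x := by
  have hcard : Fintype.card {k // (A ∘ Tuple.sort A) k ≤ x} = countA A x :=
    Fintype.card_congr <| Equiv.subtypeEquiv (Tuple.sort A) (fun k => Iff.rfl)
  have := Tuple.lt_card_le_iff_apply_le_of_monotone (f := A ∘ Tuple.sort A) (a := x)
    (j := ⟨i, hi⟩) (Tuple.monotone_sort A)
  rw [← Fintype.card_subtype, hcard] at this
  simpa [sortedAsks, dif_pos hi] using this.symm

lemma sortedBids_neg {n : ℕ} (B : Fin n → ℝ) (i : ℕ) :
    sortedBids B i = - sortedAsks (fun j => -B j) i := by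
  simp only [sortedBids, sortedAsks]
  split_ifs <;> simp

lemma sortedBids_anti {n : ℕ} (B : Fin n → ℝ) {i j : ℕ} (hij : i ≤ j) (hj : j < n) :
    sortedBids B j ≤ sortedBids B i := by
  rw [sortedBids_neg, sortedBids_neg]
  have := sortedAsks_mono (fun k => -B k) hij hj
  linarith

lemma le_sortedBids_iff {n : ℕ} (B : Fin n → ℝ) (x : ℝ) {i : ℕ} (hi : i < n) :
    x ≤ sortedBids B i ↔ i < countA (fun j => -B j) (-x) := by
  rw [sortedBids_neg, le_neg, ← sortedAsks_le_iff (fun j => -B j) (-x) hi]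

lemma initialSeg (S : Finset ℕ) (h : ∀ i ∈ S, ∀ j, j ≤ i → j ∈ S) :
    S = Finset.range S.card := by
  rcases S.eq_empty_or_nonempty with hS | hS
  · simp [hS]
  · have hmax := S.max'_mem hS
    have : S = Finset.range (S.max' hS + 1) := by
      ext i
      simp only [Finset.mem_range, Nat.lt_succ_iff]
      exact ⟨fun hi => S.le_max' i hi, fun hi => h _ hmax i hi⟩
    rw [this, Finset.card_range]

lemma numDeals_le {n : ℕ} (A B : Fin n → ℝ) : numDeals A B ≤ n := by
  simpa [numDeals] using (Finset.card_filter_le (Finset.range n)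
    (fun i => sortedAsks A i ≤ sortedBids B i)).trans_eq (Finset.card_range n)

lemma lt_numDeals_iff {n : ℕ} (A B : Fin n → ℝ) {i : ℕ} (hi : i < n) :
    i < numDeals A B ↔ sortedAsks A i ≤ sortedBids B i := by
  set S := (Finset.range n).filter fun i => sortedAsks A i ≤ sortedBids B i with hSdef
  have hdc : ∀ k ∈ S, ∀ j, j ≤ k → j ∈ S := by
    intro k hk j hjk
    simp only [hSdef, Finset.mem_filter, Finset.mem_range] at hk ⊢
    refine ⟨lt_of_le_of_lt hjk hk.1, ?_⟩
    exact ((sortedAsks_mono A hjk hk.1).trans hk.2).trans (sortedBids_anti B hjk hk.1)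
  have hseg := initialSeg S hdc
  have hmem : i ∈ S ↔ i < S.card := by
    conv_lhs => rw [hseg]
    simp
  rw [numDeals, ← hSdef, ← hmem]
  simp [hSdef, Finset.mem_filter, hi]

lemma countA_eq_filter {n : ℕ} (A : Fin n → ℝ) (x : ℝ) :
    countA A x = (Finset.univ.filter fun i => A i ≤ x).card :=
  Fintype.card_subtype _

lemma countA_update_ge {n : ℕ} (A : Fin n → ℝ) (j : Fin n) (a x : ℝ) :
    countA A x ≤ countA (Function.update A j a) x + 1 := by
  rw [countA_eq_filter, countA_eq_filter]
  have hsub : (Finset.univ.filter fun i => A i ≤ x).erase j ⊆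
      Finset.univ.filter fun i => Function.update A j a i ≤ x := by
    intro i hi
    simp only [Finset.mem_erase, Finset.mem_filter] at hi ⊢
    refine ⟨Finset.mem_univ _, ?_⟩
    rw [Function.update_of_ne hi.1]
    exact hi.2.2
  have h1 := Finset.pred_card_le_card_erase
    (s := Finset.univ.filter fun i => A i ≤ x) (a := j)
  have h2 := Finset.card_le_card hsub
  omega

lemma countA_update_le {n : ℕ} (A : Fin n → ℝ) (j : Fin n) (a x : ℝ)
    (hAj : A j ≤ x) (hax : ¬ a ≤ x) :
    countA (Function.update A j a) x + 1 ≤ countA A x := by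
  rw [countA_eq_filter, countA_eq_filter]
  have hjmem : j ∈ Finset.univ.filter fun i => A i ≤ x := by
    simp [hAj]
  have hsub : (Finset.univ.filter fun i => Function.update A j a i ≤ x) ⊆
      (Finset.univ.filter fun i => A i ≤ x).erase j := by
    intro i hi
    simp only [Finset.mem_filter] at hi
    have hij : i ≠ j := by
      rintro rfl
      rw [Function.update_self] at hi
      exact hax hi.2
    simp only [Finset.mem_erase, Finset.mem_filter]
    rw [Function.update_of_ne hij] at hi
    exact ⟨hij, Finset.mem_univ _, hi.2⟩
  have := Finset.card_le_card hsub
  rw [Finset.card_erase_of_mem hjmem] at this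
  have hpos : 1 ≤ (Finset.univ.filter fun i => A i ≤ x).card :=
    Finset.card_pos.2 ⟨j, hjmem⟩
  omega

lemma sortedAsks_sellerRank {n : ℕ} (A : Fin n → ℝ) (j : Fin n) :
    sortedAsks A (sellerRank A j) = A j := by
  simp only [sortedAsks]
  rw [dif_pos (show sellerRank A j < n from ((Tuple.sort A).symm j).isLt)]
  simp [sellerRank]

/-- In SBBA case 2 (`s (k+1) > b k`, i.e. not case 1, with `k ≥ 1`), a trading
seller (one of the first `k`) who raises her ask strictly above `b k` is excluded
from trade: after re-sorting the number of efficient deals becomes `k - 1` and the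
deviating seller's trading probability becomes `0`.  Hence `b k` is the critical
ask for sellers in this case. -/
theorem sbba_seller_critical_ask {n : ℕ} (A B : Fin n → ℝ) (j : Fin n) (a : ℝ)
    (hK : 1 ≤ numDeals A B) (hcase : ¬ caseOne A B)
    (hrank : sellerRank A j < numDeals A B)
    (ha : sortedBids B (numDeals A B - 1) < a) :
    numDeals (Function.update A j a) B = numDeals A B - 1 ∧
      sellerProb (Function.update A j a) B j = 0 := by
  classical
  set K := numDeals A B with hKdef
  set b := sortedBids B (K - 1) with hbdef
  set A' := Function.update A j a with hA'def
  have hKn : K ≤ n := numDeals_le A B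
  have hn : 0 < n := lt_of_lt_of_le hK hKn
  have hK1n : K - 1 < n := by omega
  have hcountAb_le : countA A b ≤ K := by
    by_cases hKlt : K < n
    · by_contra h
      push_neg at h
      have hs : sortedAsks A K ≤ b := (sortedAsks_le_iff A b hKlt).2 h
      exact hcase ⟨hK, hKlt, hs⟩
    · have := countA_le A b; omega
  have hsK1 : sortedAsks A (K - 1) ≤ b := (lt_numDeals_iff A B hK1n).1 (by omega)
  have hcountAb_ge : K ≤ countA A b := by
    have := (sortedAsks_le_iff A b hK1n).1 hsK1
    omega
  have hrn : sellerRank A j < n := ((Tuple.sort A).symm j).isLt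
  have hAj : A j ≤ b := by
    rw [← sortedAsks_sellerRank A j]
    exact (sortedAsks_mono A (by omega : sellerRank A j ≤ K - 1) hK1n).trans hsK1
  have hnab : ¬ a ≤ b := not_le.2 ha
  have hcu_le := countA_update_le A j a b hAj hnab
  have hcu_ge := countA_update_ge A j a b
  rw [← hA'def] at hcu_le hcu_ge
  have hcA' : countA A' b = K - 1 := by omega
  have hub : numDeals A' B ≤ K - 1 := by
    by_contra h
    push_neg at h
    have h1 : sortedAsks A' (K - 1) ≤ b := (lt_numDeals_iff A' B hK1n).1 h
    have h2 := (sortedAsks_le_iff A' b hK1n).1 h1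
    omega
  have hlb : K - 1 ≤ numDeals A' B := by
    rcases Nat.lt_or_ge (K - 1) 1 with h1 | h1
    · omega
    · have hi : K - 2 < n := by omega
      have hbb : b ≤ sortedBids B (K - 2) := sortedBids_anti B (by omega) hK1n
      have hc1 : K - 1 < countA A (sortedBids B (K - 2)) :=
        (sortedAsks_le_iff A _ hK1n).1 (hsK1.trans hbb)
      have hcu := countA_update_ge A j a (sortedBids B (K - 2))
      rw [← hA'def] at hcu
      have hc2 : K - 2 < countA A' (sortedBids B (K - 2)) := by omega
      have h3 : sortedAsks A' (K - 2) ≤ sortedBids B (K - 2) :=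
        (sortedAsks_le_iff A' _ hi).2 hc2
      have h4 := (lt_numDeals_iff A' B hi).2 h3
      omega
  have hKeq : numDeals A' B = K - 1 := le_antisymm hub hlb
  refine ⟨hKeq, ?_⟩
  have hr'n : sellerRank A' j < n := ((Tuple.sort A').symm j).isLt
  have hnot : ¬ sellerRank A' j < numDeals A' B := by
    rw [hKeq]
    intro hcon
    have h5 : sortedAsks A' (sellerRank A' j) ≤ b :=
      (sortedAsks_le_iff A' b hr'n).2 (by omega)
    rw [sortedAsks_sellerRank] at h5
    have : a ≤ b := by simpa [hA'def] using h5
    exact hnab this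
  simp [sellerProb, hnot]
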